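/- Let N(s) = k² for k² − k ≤ s < k² + k and A(t) = (1/t)∫₀ᵗ (N(s) − s)ds − 1/3. For t > 0, set r = √(t + 1/4) − ⌊√(t + 1/4) + 1/2⌋. Then exactly A(t) = (1/6 − 2r²) − (r(1 − 4r²)/2) · √(t + 1/4)/t + ((4r² + 3)(1 − 4r²))/(32 t). -/

import Mathlib

open Real MeasureTheory

lemma piece_aux (N : ℝ → ℝ)
    (hN : ∀ k : ℕ, 1 ≤ k → ∀ s : ℝ,
      (k : ℝ) ^ 2 - k ≤ s → s < (k : ℝ) ^ 2 + k → N s = (k : ℝ) ^ 2)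
    (k : ℕ) (hk : 1 ≤ k) (a b : ℝ) (ha : (k:ℝ)^2 - k ≤ a) (hab : a ≤ b)
    (hb : b ≤ (k:ℝ)^2 + k) :
    IntervalIntegrable N volume a b ∧
      ∫ s in a..b, N s = (k:ℝ)^2 * (b - a) := by
  have hb0 : ∀ᵐ x : ℝ, x ≠ b := by
    simpa only [ae_iff, ne_eq, not_not, Set.setOf_eq_eq_singleton] using Real.volume_singleton (a := b)
  have key : ∀ x : ℝ, x ≠ b → x ∈ Set.uIoc a b → N x = (k:ℝ)^2 := by
    intro x hxb hx
    rw [Set.uIoc_of_le hab] at hx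
    exact hN k hk x (ha.trans hx.1.le) ((lt_of_le_of_ne hx.2 hxb).trans_le hb)
  have hae : (fun _ : ℝ => (k:ℝ)^2) =ᵐ[volume.restrict (Set.uIoc a b)] N := by
    have h1 : ∀ᵐ x ∂(volume.restrict (Set.uIoc a b)), x ≠ b := ae_restrict_of_ae hb0
    have h2 : ∀ᵐ x ∂(volume.restrict (Set.uIoc a b)), x ∈ Set.uIoc a b :=
      ae_restrict_mem measurableSet_uIoc
    filter_upwards [h1, h2] with x hxb hx
    exact (key x hxb hx).symm
  constructor
  · exact (_root_.intervalIntegrable_const (c := (k:ℝ)^2)).congr_ae hae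
  · have : ∫ s in a..b, N s = ∫ _ in a..b, (k:ℝ)^2 := by
      apply intervalIntegral.integral_congr_ae
      filter_upwards [hb0] with x hxb hx
      exact key x hxb hx
    rw [this, intervalIntegral.integral_const, smul_eq_mul]
    ring

lemma full_aux (N : ℝ → ℝ)
    (hN : ∀ k : ℕ, 1 ≤ k → ∀ s : ℝ,
      (k : ℝ) ^ 2 - k ≤ s → s < (k : ℝ) ^ 2 + k → N s = (k : ℝ) ^ 2)
    (k : ℕ) :
    IntervalIntegrable N volume 0 ((k:ℝ)^2 + k) ∧
      ∫ s in (0:ℝ)..((k:ℝ)^2 + k), N s = (k:ℝ)^2 * ((k:ℝ)+1)^2 / 2 := by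
  induction k with
  | zero => simp
  | succ k ih =>
    have hc : ((k+1:ℕ):ℝ)^2 - ((k+1:ℕ):ℝ) = (k:ℝ)^2 + k := by push_cast; ring
    have hcd : (k:ℝ)^2 + k ≤ ((k+1:ℕ):ℝ)^2 + ((k+1:ℕ):ℝ) := by push_cast; nlinarith [Nat.cast_nonneg (α := ℝ) k]
    have hp := piece_aux N hN (k+1) (Nat.le_add_left 1 k) ((k:ℝ)^2 + k)
      (((k+1:ℕ):ℝ)^2 + ((k+1:ℕ):ℝ)) hc.le hcd le_rfl
    refine ⟨ih.1.trans hp.1, ?_⟩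
    rw [← intervalIntegral.integral_add_adjacent_intervals ih.1 hp.1, ih.2, hp.2]
    push_cast
    ring

theorem sphere_average_error_three_terms (N : ℝ → ℝ)
    (hN : ∀ k : ℕ, 1 ≤ k → ∀ s : ℝ,
      (k : ℝ) ^ 2 - k ≤ s → s < (k : ℝ) ^ 2 + k → N s = (k : ℝ) ^ 2)
    (t : ℝ) (ht : 0 < t) (r : ℝ)
    (hr : r = Real.sqrt (t + 1 / 4) - (⌊Real.sqrt (t + 1 / 4) + 1 / 2⌋ : ℝ)) :
    (1 / t) * (∫ s in (0:ℝ)..t, (N s - s)) - 1 / 3 =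
      (1 / 6 - 2 * r ^ 2)
        - (r * (1 - 4 * r ^ 2) / 2) * (Real.sqrt (t + 1 / 4) / t)
        + ((4 * r ^ 2 + 3) * (1 - 4 * r ^ 2)) / (32 * t) := by
  set x := Real.sqrt (t + 1/4) with hxdef
  have hx2 : x^2 = t + 1/4 := Real.sq_sqrt (by linarith)
  have hx0 : 0 ≤ x := Real.sqrt_nonneg _
  have hxhalf : 1/2 < x := by nlinarith
  have hmZ1 : (1:ℤ) ≤ ⌊x + 1/2⌋ := by
    rw [Int.le_floor]; push_cast; linarith
  obtain ⟨m, hm⟩ : ∃ m : ℕ, (⌊x + 1/2⌋ : ℤ) = (m : ℤ) :=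
    ⟨⌊x + 1/2⌋.toNat, (Int.toNat_of_nonneg (by linarith)).symm⟩
  have hm1 : 1 ≤ m := by exact_mod_cast hm ▸ hmZ1
  have hfl : ((m:ℝ)) ≤ x + 1/2 ∧ x + 1/2 < (m:ℝ) + 1 := by
    constructor
    · have := Int.floor_le (x + 1/2); rw [hm] at this; exact_mod_cast this
    · have := Int.lt_floor_add_one (x + 1/2); rw [hm] at this; exact_mod_cast this
  have hrM : r = x - (m:ℝ) := by rw [hr, hm]; push_cast; ring
  have hxrM : x = r + (m:ℝ) := by rw [hrM]; ring
  obtain ⟨k, hk⟩ : ∃ k : ℕ, m = k + 1 := ⟨m - 1, (Nat.succ_pred_eq_of_pos hm1).symm⟩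
  -- bounds on t
  have hMt : (m:ℝ)^2 - (m:ℝ) ≤ t := by nlinarith [hfl.1]
  have htM : t < (m:ℝ)^2 + (m:ℝ) := by nlinarith [hfl.2]
  have hceq : ((m:ℝ))^2 - (m:ℝ) = (k:ℝ)^2 + k := by rw [hk]; push_cast; ring
  have hF := full_aux N hN k
  have hp := piece_aux N hN m hm1 ((k:ℝ)^2 + k) t (by rw [hceq]) (by linarith [hceq ▸ hMt]) (by linarith)
  have hint : IntervalIntegrable N volume 0 t := hF.1.trans hp.1
  have hNint : ∫ s in (0:ℝ)..t, N s = (k:ℝ)^2 * ((k:ℝ)+1)^2/2 + (m:ℝ)^2 * (t - ((k:ℝ)^2 + k)) := by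
    rw [← intervalIntegral.integral_add_adjacent_intervals hF.1 hp.1, hF.2, hp.2]
  have hsub : ∫ s in (0:ℝ)..t, (N s - s) = (∫ s in (0:ℝ)..t, N s) - ∫ s in (0:ℝ)..t, s :=
    intervalIntegral.integral_sub hint intervalIntegral.intervalIntegrable_id
  have hid : ∫ s in (0:ℝ)..t, s = t^2/2 := by
    simp
  subst hk
  push_cast at hNint hxrM hMt htM ⊢
  have ht' : t = (r + ((k:ℝ) + 1))^2 - 1/4 := by rw [← hxrM]; linarith
  rw [hsub, hNint, hid, hxrM]
  have htne : t ≠ 0 := ht.ne'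
  field_simp
  rw [ht']
  ring
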